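/- Let H be a Hopf algebra and π : K → H, ι : H → K Hopf algebra maps with π ∘ ι = id_H. Then the coinvariant subalgebra R = K^{co π} = {x ∈ K : (id ⊗ π)Δ(x) = x ⊗ 1} is a subalgebra of K containing 1, stable under the maps x ↦ ι(h₍₁₎) x ι(S(h₍₂₎)) for h ∈ H, and the multiplication map R ⊗ H → K, r ⊗ h ↦ r ι(h), is a bijection. -/

import Mathlib

open TensorProduct Coalgebra LinearMap

namespace BosonAux

variable {k : Type*} [CommSemiring k]
variable {C D A B : Type*}

section Conv
variable [AddCommMonoid C] [Module k C] [Coalgebra k C]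
variable [AddCommMonoid D] [Module k D] [Coalgebra k D]
variable [Semiring A] [Algebra k A] [Semiring B] [Algebra k B]

/-- Convolution product of linear maps from a coalgebra to an algebra. -/
noncomputable def conv (f g : C →ₗ[k] A) : C →ₗ[k] A :=
  LinearMap.mul' k A ∘ₗ TensorProduct.map f g ∘ₗ comul

/-- The convolution unit. -/
noncomputable def eta : C →ₗ[k] A := Algebra.linearMap k A ∘ₗ counit

lemma eta_apply (c : C) : (eta : C →ₗ[k] A) c = algebraMap k A (counit (R := k) c) := rfl

lemma conv_repr (f g : C →ₗ[k] A) {c : C} {J : Type*} (repr : Coalgebra.Repr k c J) :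
    conv f g c = ∑ i ∈ repr.index, f (repr.left i) * g (repr.right i) := by
  rw [conv, LinearMap.comp_apply, LinearMap.comp_apply, ← repr.eq]
  simp [map_sum]

lemma sum_counit_smul_right {c : C} {J : Type*} (repr : Coalgebra.Repr k c J) :
    ∑ i ∈ repr.index, counit (R := k) (repr.left i) • repr.right i = c := by
  have := congrArg (TensorProduct.lid k C) (Coalgebra.sum_counit_tmul_eq (R := k) repr)
  simp only [map_sum, TensorProduct.lid_tmul] at this
  simpa using this

lemma sum_counit_smul_left {c : C} {J : Type*} (repr : Coalgebra.Repr k c J) :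
    ∑ i ∈ repr.index, counit (R := k) (repr.right i) • repr.left i = c := by
  have := congrArg (TensorProduct.rid k C) (Coalgebra.sum_tmul_counit_eq (R := k) repr)
  simp only [map_sum, TensorProduct.rid_tmul] at this
  simpa using this

lemma conv_eta_right (f : C →ₗ[k] A) : conv f (eta : C →ₗ[k] A) = f := by
  refine LinearMap.ext fun c => ?_
  have repr := Coalgebra.Repr.arbitrary k c
  rw [conv_repr f _ repr]
  have : ∀ i ∈ repr.index, f (repr.left i) * (eta : C →ₗ[k] A) (repr.right i)
      = f (counit (R := k) (repr.right i) • repr.left i) := by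
    intro i _
    rw [eta_apply, ← Algebra.commutes, ← Algebra.smul_def, map_smul]
  rw [Finset.sum_congr rfl this, ← map_sum, sum_counit_smul_left repr]

lemma conv_eta_left (f : C →ₗ[k] A) : conv (eta : C →ₗ[k] A) f = f := by
  refine LinearMap.ext fun c => ?_
  have repr := Coalgebra.Repr.arbitrary k c
  rw [conv_repr _ f repr]
  have : ∀ i ∈ repr.index, (eta : C →ₗ[k] A) (repr.left i) * f (repr.right i)
      = f (counit (R := k) (repr.left i) • repr.right i) := by
    intro i _
    rw [eta_apply, ← Algebra.smul_def, map_smul]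
  rw [Finset.sum_congr rfl this, ← map_sum, sum_counit_smul_right repr]

lemma conv_assoc (f g h : C →ₗ[k] A) : conv (conv f g) h = conv f (conv g h) := by
  refine LinearMap.ext fun c => ?_
  have repr := Coalgebra.Repr.arbitrary k c
  have a₁ : (i : C × C) → Coalgebra.Repr k (repr.left i) (C × C) :=
    fun i => Coalgebra.Repr.arbitrary k (repr.left i)
  have a₂ : (i : C × C) → Coalgebra.Repr k (repr.right i) (C × C) :=
    fun i => Coalgebra.Repr.arbitrary k (repr.right i)
  have key := Coalgebra.sum_map_tmul_tmul_eq (R := k) f g h c (repr := repr)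
    (a₁ := a₁) (a₂ := a₂)
  have key2 := congrArg (LinearMap.mul' k A ∘ₗ LinearMap.lTensor A (LinearMap.mul' k A)) key
  rw [conv_repr (conv f g) h repr, conv_repr f (conv g h) repr]
  have e1 : ∀ i ∈ repr.index, conv f g (repr.left i) * h (repr.right i)
      = ∑ j ∈ (a₁ i).index, f ((a₁ i).left j) * g ((a₁ i).right j) * h (repr.right i) := by
    intro i _; rw [conv_repr f g (a₁ i), Finset.sum_mul]
  have e2 : ∀ i ∈ repr.index, f (repr.left i) * conv g h (repr.right i)
      = ∑ j ∈ (a₂ i).index, f (repr.left i) * (g ((a₂ i).left j) * h ((a₂ i).right j)) := by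
    intro i _; rw [conv_repr g h (a₂ i), Finset.mul_sum]
  rw [Finset.sum_congr rfl e1, Finset.sum_congr rfl e2]
  simpa [map_sum, mul_assoc] using key2.symm

lemma algHom_comp_conv (φ : A →ₐ[k] B) (f g : C →ₗ[k] A) :
    φ.toLinearMap ∘ₗ conv f g = conv (φ.toLinearMap ∘ₗ f) (φ.toLinearMap ∘ₗ g) := by
  refine LinearMap.ext fun c => ?_
  have repr := Coalgebra.Repr.arbitrary k c
  simp only [LinearMap.comp_apply]
  rw [conv_repr f g repr, conv_repr _ _ repr]
  simp [map_sum]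

lemma algHom_comp_eta (φ : A →ₐ[k] B) :
    φ.toLinearMap ∘ₗ (eta : C →ₗ[k] A) = eta := by
  refine LinearMap.ext fun c => ?_
  simp [eta_apply]

lemma conv_comp_coalgHom {F : Type*} [FunLike F D C] [CoalgHomClass F k D C]
    (ψ : F) (f g : C →ₗ[k] A) :
    conv f g ∘ₗ (ψ : D →ₗ[k] C) = conv (f ∘ₗ (ψ : D →ₗ[k] C)) (g ∘ₗ (ψ : D →ₗ[k] C)) := by
  rw [conv, conv, LinearMap.comp_assoc, LinearMap.comp_assoc,
    ← CoalgHomClass.map_comp_comul ψ, TensorProduct.map_comp]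
  rfl

lemma eta_comp_coalgHom {F : Type*} [FunLike F D C] [CoalgHomClass F k D C] (ψ : F) :
    (eta : C →ₗ[k] A) ∘ₗ (ψ : D →ₗ[k] C) = eta := by
  rw [eta, LinearMap.comp_assoc, CoalgHomClass.counit_comp ψ]; rfl

end Conv

section Hopf
variable [Semiring A] [Algebra k A] [Semiring B] [Algebra k B]
variable {HA : Type*} [Semiring HA] [HopfAlgebra k HA]

lemma conv_id_antipode :
    conv (LinearMap.id : HA →ₗ[k] HA) (HopfAlgebra.antipode (R := k)) = eta := by
  have h : TensorProduct.map (LinearMap.id : HA →ₗ[k] HA) (HopfAlgebra.antipode (R := k) (A := HA))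
      = LinearMap.lTensor HA (HopfAlgebra.antipode (R := k)) := rfl
  rw [conv, h]
  exact HopfAlgebra.mul_antipode_lTensor_comul

lemma conv_antipode_id :
    conv (HopfAlgebra.antipode (R := k)) (LinearMap.id : HA →ₗ[k] HA) = eta := by
  have h : TensorProduct.map (HopfAlgebra.antipode (R := k) (A := HA)) (LinearMap.id : HA →ₗ[k] HA)
      = LinearMap.rTensor HA (HopfAlgebra.antipode (R := k)) := rfl
  rw [conv, h]
  exact HopfAlgebra.mul_antipode_rTensor_comul

/-- An algebra map from a Hopf algebra has convolution inverse its composite with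
the antipode. -/
lemma conv_algHom_antipode (φ : HA →ₐ[k] A) :
    conv φ.toLinearMap (φ.toLinearMap ∘ₗ HopfAlgebra.antipode (R := k)) = eta := by
  have := algHom_comp_conv (k := k) φ LinearMap.id (HopfAlgebra.antipode (R := k) (A := HA))
  rw [conv_id_antipode, algHom_comp_eta] at this
  simpa using this.symm

lemma conv_antipode_algHom (φ : HA →ₐ[k] A) :
    conv (φ.toLinearMap ∘ₗ HopfAlgebra.antipode (R := k)) φ.toLinearMap = eta := by
  have := algHom_comp_conv (k := k) φ (HopfAlgebra.antipode (R := k)) LinearMap.id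
  rw [conv_antipode_id, algHom_comp_eta] at this
  simpa using this.symm

end Hopf
end BosonAux

section Boson

open HopfAlgebra BosonAux

variable {k K H : Type*} [CommSemiring k] [Semiring K] [Semiring H]
  [HopfAlgebra k K] [HopfAlgebra k H]

namespace BosonAux

variable (π : K →ₐc[k] H) (ι : H →ₐc[k] K)

@[simp] lemma toCoalgHom_apply' {A B : Type*} [Semiring A] [Algebra k A] [Semiring B]
    [Algebra k B] [CoalgebraStruct k A] [CoalgebraStruct k B] (f : A →ₐc[k] B) (x : A) :
    f.toCoalgHom x = f x := rfl

/-- The coaction `θ : K → K ⊗ H`, as an algebra map. -/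
noncomputable def θA : K →ₐ[k] K ⊗[k] H :=
  (Algebra.TensorProduct.map (AlgHom.id k K) (π : K →ₐ[k] H)).comp (Bialgebra.comulAlgHom k K)

/-- `h ↦ ι h₁ ⊗ h₂`, as an algebra map. -/
noncomputable def GA : H →ₐ[k] K ⊗[k] H :=
  (Algebra.TensorProduct.map (ι : H →ₐ[k] K) (AlgHom.id k H)).comp (Bialgebra.comulAlgHom k H)

noncomputable def βA : K →ₐ[k] K ⊗[k] H := Algebra.TensorProduct.includeLeft

noncomputable def κA : H →ₐ[k] K ⊗[k] H := Algebra.TensorProduct.includeRight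

noncomputable def G'A : H →ₐ[k] K ⊗[k] H := (βA (k := k) (K := K) (H := H)).comp (ι : H →ₐ[k] K)

noncomputable def θL : K →ₗ[k] K ⊗[k] H := (θA π).toLinearMap
noncomputable def gL : H →ₗ[k] K ⊗[k] H := (GA ι).toLinearMap
noncomputable def βL : K →ₗ[k] K ⊗[k] H := (βA (k := k) (K := K) (H := H)).toLinearMap
noncomputable def κL : H →ₗ[k] K ⊗[k] H := (κA (k := k) (K := K) (H := H)).toLinearMap
noncomputable def g'L : H →ₗ[k] K ⊗[k] H := (G'A ι).toLinearMap
noncomputable def gSL : H →ₗ[k] K ⊗[k] H := gL ι ∘ₗ antipode (R := k)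
noncomputable def g'SL : H →ₗ[k] K ⊗[k] H := g'L ι ∘ₗ antipode (R := k)
noncomputable def sL : K →ₗ[k] K := ι.toLinearMap ∘ₗ antipode (R := k) ∘ₗ π.toLinearMap
noncomputable def qL : K →ₗ[k] K := conv LinearMap.id (sL π ι)
noncomputable def jL : K →ₗ[k] K := ι.toLinearMap ∘ₗ π.toLinearMap

@[simp] lemma θL_apply (x : K) : θL π x = θA π x := rfl
@[simp] lemma gL_apply (h : H) : gL ι h = GA ι h := rfl
@[simp] lemma βL_apply (x : K) : βL (k := k) (K := K) (H := H) x = x ⊗ₜ[k] 1 := rfl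
@[simp] lemma κL_apply (h : H) : κL (k := k) (K := K) (H := H) h = 1 ⊗ₜ[k] h := rfl
@[simp] lemma g'L_apply (h : H) : g'L ι h = ι h ⊗ₜ[k] 1 := rfl

lemma θL_eq : θL π = LinearMap.lTensor K π.toLinearMap ∘ₗ comul := by
  refine LinearMap.ext fun x => ?_
  have h : (Algebra.TensorProduct.map (AlgHom.id k K) (π : K →ₐ[k] H)).toLinearMap
      = LinearMap.lTensor K π.toLinearMap := by
    apply TensorProduct.ext'
    intro a b
    simp
  have := LinearMap.congr_fun h (comul (R := k) x)
  simpa [θL, θA] using this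

lemma gL_eq : gL ι = TensorProduct.map ι.toLinearMap LinearMap.id ∘ₗ comul := by
  refine LinearMap.ext fun x => ?_
  have h : (Algebra.TensorProduct.map (ι : H →ₐ[k] K) (AlgHom.id k H)).toLinearMap
      = TensorProduct.map ι.toLinearMap LinearMap.id := by
    apply TensorProduct.ext'
    intro a b
    simp
  have := LinearMap.congr_fun h (comul (R := k) x)
  simpa [gL, GA] using this

lemma gL_repr {h : H} {J : Type*} (repr : Coalgebra.Repr k h J) :
    gL ι h = ∑ i ∈ repr.index, ι (repr.left i) ⊗ₜ[k] repr.right i := by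
  rw [gL_eq, LinearMap.comp_apply, ← repr.eq]
  simp [map_sum]

lemma coe_toLin {A B : Type*} [Semiring A] [Algebra k A] [Semiring B] [Algebra k B]
    [CoalgebraStruct k A] [CoalgebraStruct k B] (f : A →ₐc[k] B) :
    ((f : A →ₗ[k] B)) = f.toLinearMap := rfl

lemma theta_iota (hπι : ∀ h : H, π (ι h) = h) :
    θL π ∘ₗ ι.toLinearMap = gL ι := by
  have hcomp : π.toLinearMap ∘ₗ ι.toLinearMap = LinearMap.id := by
    refine LinearMap.ext fun h => ?_
    simpa using hπι h
  rw [θL_eq, gL_eq, LinearMap.comp_assoc]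
  have hcoalg := CoalgHomClass.map_comp_comul ι
  rw [coe_toLin] at hcoalg
  rw [← hcoalg, ← LinearMap.comp_assoc]
  congr 1
  have h1 : LinearMap.lTensor K π.toLinearMap
      = TensorProduct.map LinearMap.id π.toLinearMap := rfl
  rw [h1, ← TensorProduct.map_comp, hcomp, LinearMap.id_comp]

lemma conv_g'_kappa :
    conv (g'L ι) (κL (k := k) (K := K) (H := H)) = gL ι := by
  refine LinearMap.ext fun h => ?_
  have repr := Coalgebra.Repr.arbitrary k h
  rw [conv_repr _ _ repr, gL_repr ι repr]
  refine Finset.sum_congr rfl fun i _ => ?_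
  simp [Algebra.TensorProduct.tmul_mul_tmul]

lemma conv_u'_kappa (x : K) :
    conv (LinearMap.mulRight k (x ⊗ₜ[k] (1 : H)) ∘ₗ g'L ι) (κL (k := k) (K := K) (H := H))
      = LinearMap.mulRight k (x ⊗ₜ[k] (1 : H)) ∘ₗ gL ι := by
  refine LinearMap.ext fun h => ?_
  have repr := Coalgebra.Repr.arbitrary k h
  rw [conv_repr _ _ repr, LinearMap.comp_apply, gL_repr ι repr]
  rw [map_sum]
  refine Finset.sum_congr rfl fun i _ => ?_
  simp [Algebra.TensorProduct.tmul_mul_tmul]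

/-- The map `h ⊗ x ↦ ι(h₁) x ι(S h₂)` (same expression as in the theorem). -/
noncomputable def adFull : H ⊗[k] K →ₗ[k] K :=
  LinearMap.mul' k K ∘ₗ
    LinearMap.lTensor K (LinearMap.mul' k K ∘ₗ (TensorProduct.comm k K K).toLinearMap) ∘ₗ
    (TensorProduct.assoc k K K K).toLinearMap ∘ₗ
    TensorProduct.map
      (TensorProduct.map ι.toLinearMap
        (ι.toLinearMap ∘ₗ HopfAlgebra.antipode (R := k))) LinearMap.id ∘ₗ
    LinearMap.rTensor K (comul (R := k))

lemma adFull_repr (x : K) {h : H} {J : Type*} (repr : Coalgebra.Repr k h J) :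
    adFull ι (h ⊗ₜ[k] x)
      = ∑ i ∈ repr.index, ι (repr.left i) * (x * ι (antipode (R := k) (repr.right i))) := by
  rw [adFull]
  simp only [LinearMap.comp_apply, LinearMap.rTensor_tmul, ← repr.eq]
  rw [TensorProduct.sum_tmul, map_sum, map_sum, map_sum, map_sum]
  refine Finset.sum_congr rfl fun i _ => ?_
  simp

lemma theta_adFull (hπι : ∀ h : H, π (ι h) = h) (x : K) (hx : θL π x = x ⊗ₜ[k] 1) :
    θL π ∘ₗ (adFull ι ∘ₗ (TensorProduct.mk k H K).flip x)
      = conv (LinearMap.mulRight k (x ⊗ₜ[k] (1 : H)) ∘ₗ gL ι) (gSL ι) := by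
  refine LinearMap.ext fun h => ?_
  have repr := Coalgebra.Repr.arbitrary k h
  rw [conv_repr _ _ repr]
  simp only [LinearMap.comp_apply, TensorProduct.mk_apply, LinearMap.flip_apply]
  rw [adFull_repr ι x repr, map_sum]
  refine Finset.sum_congr rfl fun i _ => ?_
  have hι : ∀ y : H, θL π (ι y) = gL ι y := fun y =>
    LinearMap.congr_fun (theta_iota π ι hπι) y
  have : θL π (ι (repr.left i) * (x * ι (antipode (R := k) (repr.right i))))
      = θA π (ι (repr.left i)) * (θA π x * θA π (ι (antipode (R := k) (repr.right i)))) := by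
    simp [map_mul]
  rw [this]
  rw [show θA π (ι (repr.left i)) = gL ι (repr.left i) from hι _,
    show θA π (ι (antipode (R := k) (repr.right i)))
      = gL ι (antipode (R := k) (repr.right i)) from hι _,
    show θA π x = x ⊗ₜ[k] 1 from hx]
  rw [gSL, LinearMap.comp_apply, LinearMap.mulRight_apply, mul_assoc]

lemma beta_adFull (x : K) :
    (βL : K →ₗ[k] K ⊗[k] H) ∘ₗ (adFull ι ∘ₗ (TensorProduct.mk k H K).flip x)
      = conv (LinearMap.mulRight k (x ⊗ₜ[k] (1 : H)) ∘ₗ g'L ι) (g'SL ι) := by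
  refine LinearMap.ext fun h => ?_
  have repr := Coalgebra.Repr.arbitrary k h
  rw [conv_repr _ _ repr]
  simp only [LinearMap.comp_apply, TensorProduct.mk_apply, LinearMap.flip_apply]
  rw [adFull_repr ι x repr, map_sum]
  refine Finset.sum_congr rfl fun i _ => ?_
  rw [g'SL, LinearMap.comp_apply, LinearMap.mulRight_apply]
  simp [Algebra.TensorProduct.tmul_mul_tmul, mul_assoc]

lemma conv_gL_gSL : conv (gL ι) (gSL ι) = eta := conv_algHom_antipode (GA ι)

lemma conv_gSL_gL : conv (gSL ι) (gL ι) = eta := conv_antipode_algHom (GA ι)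

lemma conv_g'L_g'SL : conv (g'L ι) (g'SL ι) = eta := conv_algHom_antipode (G'A ι)

lemma conv_g'SL_g'L : conv (g'SL ι) (g'L ι) = eta := conv_antipode_algHom (G'A ι)

lemma conv_g'SL_gL : conv (g'SL ι) (gL ι) = κL (k := k) (K := K) (H := H) := by
  calc conv (g'SL ι) (gL ι)
      = conv (g'SL ι) (conv (g'L ι) (κL (k := k) (K := K) (H := H))) := by
        rw [conv_g'_kappa]
    _ = conv (conv (g'SL ι) (g'L ι)) (κL (k := k) (K := K) (H := H)) := (conv_assoc _ _ _).symm
    _ = _ := by rw [conv_g'SL_g'L, conv_eta_left]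

lemma ad_mem (hπι : ∀ h : H, π (ι h) = h) (x : K) (hx : θL π x = x ⊗ₜ[k] 1) :
    θL π ∘ₗ (adFull ι ∘ₗ (TensorProduct.mk k H K).flip x)
      = βL ∘ₗ (adFull ι ∘ₗ (TensorProduct.mk k H K).flip x) := by
  rw [theta_adFull π ι hπι x hx, beta_adFull ι x]
  set u := LinearMap.mulRight k (x ⊗ₜ[k] (1 : H)) ∘ₗ gL ι with hu
  set u' := LinearMap.mulRight k (x ⊗ₜ[k] (1 : H)) ∘ₗ g'L ι with hu'
  have hY : conv (conv u' (g'SL ι)) (gL ι) = u := by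
    rw [conv_assoc, conv_g'SL_gL, hu', conv_u'_kappa]
  calc conv u (gSL ι)
      = conv (conv (conv u' (g'SL ι)) (gL ι)) (gSL ι) := by rw [hY]
    _ = conv (conv u' (g'SL ι)) (conv (gL ι) (gSL ι)) := conv_assoc _ _ _
    _ = conv u' (g'SL ι) := by rw [conv_gL_gSL, conv_eta_right]

lemma toAlgHom_lin {A B : Type*} [Semiring A] [Algebra k A] [Semiring B] [Algebra k B]
    [CoalgebraStruct k A] [CoalgebraStruct k B] (f : A →ₐc[k] B) :
    (f : A →ₐ[k] B).toLinearMap = f.toLinearMap := rfl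

lemma piL (hπι : ∀ h : H, π (ι h) = h) :
    π.toLinearMap ∘ₗ ι.toLinearMap = LinearMap.id := by
  refine LinearMap.ext fun h => ?_
  simpa using hπι h

lemma conv_iotaS_iota :
    conv (ι.toLinearMap ∘ₗ antipode (R := k) (A := H)) ι.toLinearMap = eta := by
  have := conv_antipode_algHom (k := k) (ι : H →ₐ[k] K)
  rwa [toAlgHom_lin] at this

lemma conv_iota_iotaS :
    conv ι.toLinearMap (ι.toLinearMap ∘ₗ antipode (R := k) (A := H)) = eta := by
  have := conv_algHom_antipode (k := k) (ι : H →ₐ[k] K)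
  rwa [toAlgHom_lin] at this

lemma conv_sL_jL : conv (sL π ι) (jL π ι) = eta := by
  have h := conv_comp_coalgHom (k := k) (A := K) π
    (ι.toLinearMap ∘ₗ antipode (R := k) (A := H)) ι.toLinearMap
  rw [conv_iotaS_iota ι, eta_comp_coalgHom π, coe_toLin] at h
  rw [sL, jL, ← LinearMap.comp_assoc]
  exact h.symm

lemma conv_qL_jL : conv (qL π ι) (jL π ι) = LinearMap.id := by
  rw [qL, conv_assoc, conv_sL_jL, conv_eta_right]

lemma qL_iota (hπι : ∀ h : H, π (ι h) = h) :
    qL π ι ∘ₗ ι.toLinearMap = eta := by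
  have h := conv_comp_coalgHom (k := k) (A := K) ι LinearMap.id (sL π ι)
  rw [coe_toLin] at h
  have hs : sL π ι ∘ₗ ι.toLinearMap = ι.toLinearMap ∘ₗ antipode (R := k) (A := H) := by
    rw [sL, LinearMap.comp_assoc, LinearMap.comp_assoc, piL π ι hπι, LinearMap.comp_id]
  rw [qL, h, LinearMap.id_comp, hs, conv_iota_iotaS]

lemma g'L_eq : g'L ι = βL ∘ₗ ι.toLinearMap := rfl

lemma theta_sL (hπι : ∀ h : H, π (ι h) = h) :
    θL π ∘ₗ sL π ι = gSL ι ∘ₗ π.toLinearMap := by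
  rw [sL, gSL, ← LinearMap.comp_assoc, ← LinearMap.comp_assoc, theta_iota π ι hπι,
    LinearMap.comp_assoc, ← LinearMap.comp_assoc]

lemma beta_sL : (βL : K →ₗ[k] K ⊗[k] H) ∘ₗ sL π ι = g'SL ι ∘ₗ π.toLinearMap := by
  rw [sL, g'SL, g'L_eq, ← LinearMap.comp_assoc, ← LinearMap.comp_assoc]

lemma conv_beta_kappa_pi :
    conv (βL : K →ₗ[k] K ⊗[k] H) (κL (k := k) (K := K) (H := H) ∘ₗ π.toLinearMap) = θL π := by
  refine LinearMap.ext fun x => ?_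
  have repr := Coalgebra.Repr.arbitrary k x
  rw [conv_repr _ _ repr, θL_eq, LinearMap.comp_apply, ← repr.eq, map_sum]
  refine Finset.sum_congr rfl fun i _ => ?_
  simp [Algebra.TensorProduct.tmul_mul_tmul]

lemma theta_q (hπι : ∀ h : H, π (ι h) = h) :
    θL π ∘ₗ qL π ι = (βL : K →ₗ[k] K ⊗[k] H) ∘ₗ qL π ι := by
  have h1 : θL π ∘ₗ qL π ι = conv (θL π) (gSL ι ∘ₗ π.toLinearMap) := by
    have h := algHom_comp_conv (θA π) LinearMap.id (sL π ι)
    rw [qL]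
    calc (θA π).toLinearMap ∘ₗ conv LinearMap.id (sL π ι)
        = conv ((θA π).toLinearMap ∘ₗ LinearMap.id) ((θA π).toLinearMap ∘ₗ sL π ι) := h
      _ = conv (θL π) (gSL ι ∘ₗ π.toLinearMap) := by
          rw [LinearMap.comp_id]
          exact congrArg _ (theta_sL π ι hπι)
  have h2 : (βL : K →ₗ[k] K ⊗[k] H) ∘ₗ qL π ι
      = conv (βL : K →ₗ[k] K ⊗[k] H) (g'SL ι ∘ₗ π.toLinearMap) := by
    have h := algHom_comp_conv (βA (k := k) (K := K) (H := H)) LinearMap.id (sL π ι)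
    rw [qL]
    calc (βA (k := k) (K := K) (H := H)).toLinearMap ∘ₗ conv LinearMap.id (sL π ι)
        = conv ((βA (k := k) (K := K) (H := H)).toLinearMap ∘ₗ LinearMap.id)
            ((βA (k := k) (K := K) (H := H)).toLinearMap ∘ₗ sL π ι) := h
      _ = conv (βL : K →ₗ[k] K ⊗[k] H) (g'SL ι ∘ₗ π.toLinearMap) := by
          rw [LinearMap.comp_id]
          exact congrArg _ (beta_sL π ι)
  have hGπ : conv (gL ι ∘ₗ π.toLinearMap) (gSL ι ∘ₗ π.toLinearMap) = eta := by
    have h := conv_comp_coalgHom (k := k) (A := K ⊗[k] H) π (gL ι) (gSL ι)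
    rw [conv_gL_gSL, eta_comp_coalgHom π, coe_toLin] at h
    exact h.symm
  have h5π : conv (g'SL ι ∘ₗ π.toLinearMap) (gL ι ∘ₗ π.toLinearMap)
      = κL (k := k) (K := K) (H := H) ∘ₗ π.toLinearMap := by
    have h := conv_comp_coalgHom (k := k) (A := K ⊗[k] H) π (g'SL ι) (gL ι)
    rw [conv_g'SL_gL, coe_toLin] at h
    exact h.symm
  have hY : conv (conv (βL : K →ₗ[k] K ⊗[k] H) (g'SL ι ∘ₗ π.toLinearMap))
      (gL ι ∘ₗ π.toLinearMap) = θL π := by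
    rw [conv_assoc, h5π, conv_beta_kappa_pi]
  rw [h1, h2, ← hY, conv_assoc, hGπ, conv_eta_right]

lemma q_eq : qL π ι
    = (LinearMap.mul' k K ∘ₗ
        LinearMap.lTensor K (ι.toLinearMap ∘ₗ antipode (R := k))) ∘ₗ θL π := by
  rw [θL_eq, qL, conv]
  have h1 : TensorProduct.map (LinearMap.id : K →ₗ[k] K) (sL π ι)
      = LinearMap.lTensor K (sL π ι) := rfl
  have h2 : LinearMap.lTensor K (sL π ι)
      = LinearMap.lTensor K (ι.toLinearMap ∘ₗ antipode (R := k))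
          ∘ₗ LinearMap.lTensor K π.toLinearMap := by
    rw [← LinearMap.lTensor_comp, sL, LinearMap.comp_assoc]
  rw [h1, h2, LinearMap.comp_assoc, LinearMap.comp_assoc]

lemma q_coinv_mul (a : K) (ha : θL π a = a ⊗ₜ[k] 1) (b : K) :
    qL π ι (a * b) = a * qL π ι b := by
  rw [q_eq]
  simp only [LinearMap.comp_apply]
  have hmul : θL π (a * b) = (a ⊗ₜ[k] (1 : H)) * θL π b := by
    rw [← ha]
    exact map_mul (θA π) a b
  rw [hmul]
  generalize θL π b = z
  induction z using TensorProduct.induction_on with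
  | zero => simp
  | tmul y h => simp [Algebra.TensorProduct.tmul_mul_tmul, mul_assoc]
  | add u v hu hv => simp only [mul_add, map_add, hu, hv]

end BosonAux
end Boson

/-- Let `π : K → H`, `ι : H → K` be Hopf algebra maps with `π ∘ ι = id_H`.
Then the coinvariants `R = K^{co π} = {x : (id ⊗ π)Δ(x) = x ⊗ 1}` form a subalgebra of `K`
containing `1`, stable under the maps `x ↦ ι(h₁) x ι(S(h₂))` for `h ∈ H`, and the
multiplication map `R ⊗ H → K`, `r ⊗ h ↦ r ι(h)`, is bijective. -/
theorem coinvariants_bosonization {k K H : Type*} [Field k] [Ring K] [Ring H]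
    [HopfAlgebra k K] [HopfAlgebra k H]
    (π : K →ₐc[k] H) (ι : H →ₐc[k] K) (hπι : ∀ h : H, π (ι h) = h) :
    let R : Submodule k K := LinearMap.ker
      ((LinearMap.lTensor K π.toLinearMap ∘ₗ comul (R := k)) -
        (TensorProduct.mk k K H).flip 1)
    -- the map `h ⊗ x ↦ ι(h₍₁₎) x ι(S(h₍₂₎))`
    let adMap : H ⊗[k] K →ₗ[k] K :=
      LinearMap.mul' k K ∘ₗ
        LinearMap.lTensor K (LinearMap.mul' k K ∘ₗ (TensorProduct.comm k K K).toLinearMap) ∘ₗ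
        (TensorProduct.assoc k K K K).toLinearMap ∘ₗ
        TensorProduct.map
          (TensorProduct.map ι.toLinearMap
            (ι.toLinearMap ∘ₗ HopfAlgebra.antipode (R := k))) LinearMap.id ∘ₗ
        LinearMap.rTensor K (comul (R := k))
    (1 : K) ∈ R ∧
    (∀ x ∈ R, ∀ y ∈ R, x * y ∈ R) ∧
    (∀ (h : H), ∀ x ∈ R, adMap (h ⊗ₜ[k] x) ∈ R) ∧
    Function.Bijective
      (LinearMap.mul' k K ∘ₗ TensorProduct.map R.subtype ι.toLinearMap :
        R ⊗[k] H →ₗ[k] K) := by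
  intro R adMap
  classical
  have hmem : ∀ x : K, x ∈ R ↔ BosonAux.θL π x = x ⊗ₜ[k] (1 : H) := by
    intro x
    have h0 : x ∈ R ↔ ((LinearMap.lTensor K π.toLinearMap ∘ₗ comul (R := k)) -
        (TensorProduct.mk k K H).flip 1) x = 0 := Iff.rfl
    rw [h0, LinearMap.sub_apply, sub_eq_zero, ← BosonAux.θL_eq π]
    exact Iff.rfl
  refine ⟨?_, ?_, ?_, ?_⟩
  · -- 1 ∈ R
    refine (hmem 1).2 ?_
    have h1 : BosonAux.θL π 1 = 1 := map_one (BosonAux.θA π)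
    rw [h1, Algebra.TensorProduct.one_def]
  · -- closed under multiplication
    intro x hx y hy
    refine (hmem _).2 ?_
    have hm : BosonAux.θL π (x * y) = BosonAux.θL π x * BosonAux.θL π y :=
      map_mul (BosonAux.θA π) x y
    rw [hm, (hmem x).1 hx, (hmem y).1 hy, Algebra.TensorProduct.tmul_mul_tmul, one_mul]
  · -- stability under the adjoint action
    intro h x hx
    refine (hmem _).2 ?_
    have h2 := LinearMap.congr_fun (BosonAux.ad_mem π ι hπι x ((hmem x).1 hx)) h
    simp only [LinearMap.comp_apply, LinearMap.flip_apply, TensorProduct.mk_apply,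
      BosonAux.βL_apply] at h2
    exact h2
  · -- bijectivity of the multiplication map
    have hq_mem : ∀ x : K, BosonAux.qL π ι x ∈ R := fun x => (hmem _).2 (by
      have h3 := LinearMap.congr_fun (BosonAux.theta_q π ι hπι) x
      simpa using h3)
    set q' : K →ₗ[k] R := (BosonAux.qL π ι).codRestrict R hq_mem with hq'
    set Ψ : K →ₗ[k] R ⊗[k] H := (TensorProduct.map q' LinearMap.id) ∘ₗ BosonAux.θL π with hΨ
    set Φ : R ⊗[k] H →ₗ[k] K :=
      LinearMap.mul' k K ∘ₗ TensorProduct.map R.subtype ι.toLinearMap with hΦ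
    have e1 : R.subtype ∘ₗ q' = BosonAux.qL π ι :=
      (BosonAux.qL π ι).subtype_comp_codRestrict _ hq_mem
    have hΦΨ : Φ ∘ₗ Ψ = LinearMap.id := by
      have key : Φ ∘ₗ Ψ = BosonAux.conv (BosonAux.qL π ι) (BosonAux.jL π ι) := by
        have a1 : TensorProduct.map R.subtype ι.toLinearMap ∘ₗ TensorProduct.map q' LinearMap.id
            = TensorProduct.map (BosonAux.qL π ι) ι.toLinearMap := by
          rw [← TensorProduct.map_comp, e1, LinearMap.comp_id]
        have a2 : TensorProduct.map (BosonAux.qL π ι) ι.toLinearMap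
            ∘ₗ LinearMap.lTensor K π.toLinearMap
            = TensorProduct.map (BosonAux.qL π ι) (BosonAux.jL π ι) := by
          have hl : LinearMap.lTensor K π.toLinearMap
              = TensorProduct.map LinearMap.id π.toLinearMap := rfl
          rw [hl, ← TensorProduct.map_comp, LinearMap.comp_id, BosonAux.jL]
        rw [hΦ, hΨ, BosonAux.θL_eq, BosonAux.conv, ← a2, ← a1]
        simp only [LinearMap.comp_assoc]
      rw [key]
      exact BosonAux.conv_qL_jL π ι
    have hΨΦ : Ψ ∘ₗ Φ = LinearMap.id := by
      apply TensorProduct.ext'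
      intro r h
      have repr := Coalgebra.Repr.arbitrary k h
      have hΦrh : Φ (r ⊗ₜ[k] h) = (r : K) * ι h := by
        simp [hΦ]
      simp only [LinearMap.comp_apply, LinearMap.id_coe, id_eq]
      rw [hΦrh, hΨ]
      simp only [LinearMap.comp_apply]
      have hθ : BosonAux.θL π ((r : K) * ι h)
          = ∑ i ∈ repr.index, ((r : K) * ι (repr.left i)) ⊗ₜ[k] repr.right i := by
        have hmul : BosonAux.θL π ((r : K) * ι h)
            = BosonAux.θL π (r : K) * BosonAux.θL π (ι h) := map_mul (BosonAux.θA π) _ _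
        have hιh : BosonAux.θL π (ι h) = BosonAux.gL ι h := by
          have := LinearMap.congr_fun (BosonAux.theta_iota π ι hπι) h
          simpa using this
        rw [hmul, (hmem (r : K)).1 r.2, hιh, BosonAux.gL_repr ι repr, Finset.mul_sum]
        refine Finset.sum_congr rfl fun i _ => ?_
        rw [Algebra.TensorProduct.tmul_mul_tmul, one_mul]
      rw [hθ, map_sum]
      have hqval : ∀ l : H, BosonAux.qL π ι ((r : K) * ι l)
          = counit (R := k) l • (r : K) := by
        intro l
        rw [BosonAux.q_coinv_mul π ι (r : K) ((hmem (r : K)).1 r.2) (ι l)]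
        have hqι := LinearMap.congr_fun (BosonAux.qL_iota π ι hπι) l
        simp only [LinearMap.comp_apply] at hqι
        have : BosonAux.qL π ι (ι l) = algebraMap k K (counit (R := k) l) := hqι
        rw [this, ← Algebra.commutes, ← Algebra.smul_def]
      have hterm : ∀ i ∈ repr.index,
          TensorProduct.map q' LinearMap.id
            (((r : K) * ι (repr.left i)) ⊗ₜ[k] repr.right i)
          = r ⊗ₜ[k] (counit (R := k) (repr.left i) • repr.right i) := by
        intro i _
        rw [TensorProduct.map_tmul]
        have hq2 : q' ((r : K) * ι (repr.left i)) = counit (R := k) (repr.left i) • r := by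
          apply Subtype.ext
          have : (q' ((r : K) * ι (repr.left i)) : K)
              = BosonAux.qL π ι ((r : K) * ι (repr.left i)) := rfl
          rw [this, hqval]
          rfl
        rw [hq2, LinearMap.id_coe, id_eq, TensorProduct.smul_tmul]
      rw [Finset.sum_congr rfl hterm, ← TensorProduct.tmul_sum,
        BosonAux.sum_counit_smul_right repr]
    refine Function.bijective_iff_has_inverse.mpr ⟨Ψ, ?_, ?_⟩
    · intro a
      exact LinearMap.congr_fun hΨΦ a
    · intro x
      exact LinearMap.congr_fun hΦΨ x
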